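/- For distinct i, j, k, the Bruhat operators satisfy the 3-term relation [ij][jk] + [jk][ki] + [ki][ij] = 0, with the convention [ji] = -[ij]. -/

import Mathlib

open Finsupp

/-- The Coxeter length of a permutation of `Fin n`: the number of inversions. -/
def len {n : ℕ} (w : Equiv.Perm (Fin n)) : ℕ :=
  ((Finset.univ : Finset (Fin n × Fin n)).filter
    (fun p => p.1 < p.2 ∧ w p.2 < w p.1)).card

open Classical in
/-- The Bruhat operator `[ij]` on the free `ℤ`-module with basis `S_n`:
`[ij]·w = w·s_{ij}` if `ℓ(w s_{ij}) = ℓ(w) + 1`, and `0` otherwise. -/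
noncomputable def bruhatOp {n : ℕ} (i j : Fin n) :
    (Equiv.Perm (Fin n) →₀ ℤ) →ₗ[ℤ] (Equiv.Perm (Fin n) →₀ ℤ) :=
  Finsupp.lsum ℤ fun w =>
    if len (w * Equiv.swap i j) = len w + 1 then
      Finsupp.lsingle (w * Equiv.swap i j)
    else 0

/-- The signed Bruhat operator, with the convention `[ji] = -[ij]` for `i < j`
(and `[ii] = 0`). -/
noncomputable def sBruhatOp {n : ℕ} (i j : Fin n) :
    (Equiv.Perm (Fin n) →₀ ℤ) →ₗ[ℤ] (Equiv.Perm (Fin n) →₀ ℤ) :=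
  if i < j then bruhatOp i j else if j < i then -bruhatOp j i else 0

/-! ### The length formula for multiplying by a transposition -/

section LenFormula
variable {n : ℕ}

lemma lenZ (w : Equiv.Perm (Fin n)) :
    (len w : ℤ) = ∑ z : Fin n × Fin n, (if z.1 < z.2 ∧ w z.2 < w z.1 then (1:ℤ) else 0) := by
  rw [len, Finset.card_filter]
  push_cast
  rfl

lemma lenZ_mul_swap (w : Equiv.Perm (Fin n)) (p q : Fin n) :
    (len (w * Equiv.swap p q) : ℤ) =
      ∑ z : Fin n × Fin n,
        (if Equiv.swap p q z.1 < Equiv.swap p q z.2 ∧ w z.2 < w z.1 then (1:ℤ) else 0) := by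
  rw [lenZ]
  refine Fintype.sum_equiv ((Equiv.swap p q).prodCongr (Equiv.swap p q)) _ _ (fun z => ?_)
  simp [Equiv.Perm.mul_apply, Equiv.swap_apply_self]
  congr

set_option maxHeartbeats 2000000 in
lemma pointwise (w : Equiv.Perm (Fin n)) {p q : Fin n} (hpq : p < q) (hw : w p < w q)
    (z : Fin n × Fin n) :
    (if Equiv.swap p q z.1 < Equiv.swap p q z.2 ∧ w z.2 < w z.1 then (1:ℤ) else 0)
    = (if z.1 < z.2 ∧ w z.2 < w z.1 then (1:ℤ) else 0)
      + ((if z = (q, p) then (1:ℤ) else 0)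
       + (if z.1 = p ∧ p < z.2 ∧ z.2 < q ∧ w z.2 < w p then (-1:ℤ) else 0)
       + (if z.2 = p ∧ p < z.1 ∧ z.1 < q ∧ w p < w z.1 then (1:ℤ) else 0)
       + (if z.1 = q ∧ p < z.2 ∧ z.2 < q ∧ w z.2 < w q then (1:ℤ) else 0)
       + (if z.2 = q ∧ p < z.1 ∧ z.1 < q ∧ w q < w z.1 then (-1:ℤ) else 0)) := by
  obtain ⟨u, v⟩ := z
  have hne : p ≠ q := ne_of_lt hpq
  by_cases hup : u = p <;> by_cases huq : u = q <;> by_cases hvp : v = p <;> by_cases hvq : v = q <;>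
    first
    | (exfalso; simp_all; done)
    | (subst_vars
       simp only [ne_eq, not_false_iff, Equiv.swap_apply_left, Equiv.swap_apply_right,
         Equiv.swap_apply_of_ne_of_ne, Prod.mk.injEq, *, lt_irrefl,
         false_and, and_false, true_and, and_true, if_false, if_true]
       simp only [Fin.lt_def] at *
       first
         | (split_ifs <;> omega)
         | omega)

lemma helper_fst (c : ℤ) (C : Fin n → Prop) [DecidablePred C] (p : Fin n) :
    ∑ z : Fin n × Fin n, (if z.1 = p ∧ C z.2 then c else 0)
      = ∑ v : Fin n, (if C v then c else 0) := by
  rw [Fintype.sum_prod_type]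
  rw [Finset.sum_eq_single p]
  · simp
  · intro u _ hu
    simp [hu]
  · simp

lemma helper_snd (c : ℤ) (C : Fin n → Prop) [DecidablePred C] (p : Fin n) :
    ∑ z : Fin n × Fin n, (if z.2 = p ∧ C z.1 then c else 0)
      = ∑ u : Fin n, (if C u then c else 0) := by
  rw [Fintype.sum_prod_type]
  refine Finset.sum_congr rfl (fun u _ => ?_)
  rw [Finset.sum_eq_single p] <;> simp_all

lemma key_r (w : Equiv.Perm (Fin n)) {p q : Fin n} (hw : w p < w q) (r : Fin n) :
    (if p < r ∧ r < q ∧ w r < w p then (-1:ℤ) else 0)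
    + (if p < r ∧ r < q ∧ w p < w r then (1:ℤ) else 0)
    + (if p < r ∧ r < q ∧ w r < w q then (1:ℤ) else 0)
    + (if p < r ∧ r < q ∧ w q < w r then (-1:ℤ) else 0)
    = 2 * (if p < r ∧ r < q ∧ w p < w r ∧ w r < w q then (1:ℤ) else 0) := by
  have h1 : (r : ℕ) = (p : ℕ) ∨ ((w r : ℕ) ≠ (w p : ℕ)) := by
    rcases eq_or_ne r p with h | h
    · exact Or.inl (by rw [h])
    · exact Or.inr (fun hh => h (w.injective (Fin.ext hh)))
  have h2 : (r : ℕ) = (q : ℕ) ∨ ((w r : ℕ) ≠ (w q : ℕ)) := by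
    rcases eq_or_ne r q with h | h
    · exact Or.inl (by rw [h])
    · exact Or.inr (fun hh => h (w.injective (Fin.ext hh)))
  simp only [Fin.lt_def] at *
  split_ifs <;> omega

/-- Number of "blockers" between `p` and `q`. -/
def nblk (w : Equiv.Perm (Fin n)) (p q : Fin n) : ℕ :=
  (Finset.univ.filter (fun r => p < r ∧ r < q ∧ w p < w r ∧ w r < w q)).card

lemma len_mul_swap_of_lt (w : Equiv.Perm (Fin n)) {p q : Fin n} (hpq : p < q)
    (hw : w p < w q) :
    (len (w * Equiv.swap p q) : ℤ) = (len w : ℤ) + 2 * (nblk w p q : ℤ) + 1 := by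
  rw [lenZ_mul_swap]
  rw [Finset.sum_congr rfl (fun z _ => pointwise w hpq hw z)]
  simp only [Finset.sum_add_distrib]
  rw [← lenZ]
  have h0 : ∑ z : Fin n × Fin n, (if z = (q, p) then (1:ℤ) else 0) = 1 := by
    simp
  have h1 := helper_fst (-1 : ℤ) (fun v => p < v ∧ v < q ∧ w v < w p) p
  have h2 := helper_snd (1 : ℤ) (fun u => p < u ∧ u < q ∧ w p < w u) p
  have h3 := helper_fst (1 : ℤ) (fun v => p < v ∧ v < q ∧ w v < w q) q
  have h4 := helper_snd (-1 : ℤ) (fun u => p < u ∧ u < q ∧ w q < w u) q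
  rw [h0, h1, h2, h3, h4]
  have hsum : ∑ v : Fin n, (if p < v ∧ v < q ∧ w v < w p then (-1:ℤ) else 0)
      + ∑ v : Fin n, (if p < v ∧ v < q ∧ w p < w v then (1:ℤ) else 0)
      + ∑ v : Fin n, (if p < v ∧ v < q ∧ w v < w q then (1:ℤ) else 0)
      + ∑ v : Fin n, (if p < v ∧ v < q ∧ w q < w v then (-1:ℤ) else 0)
      = 2 * (nblk w p q : ℤ) := by
    rw [← Finset.sum_add_distrib, ← Finset.sum_add_distrib, ← Finset.sum_add_distrib]
    rw [Finset.sum_congr rfl (fun r _ => key_r w hw r)]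
    rw [← Finset.mul_sum]
    congr 1
    rw [nblk, Finset.card_filter]
    push_cast
    rfl
  linarith [hsum]

lemma len_mul_swap_of_gt (w : Equiv.Perm (Fin n)) {p q : Fin n} (hpq : p < q)
    (hw : w q < w p) :
    (len w : ℤ) = (len (w * Equiv.swap p q) : ℤ)
      + 2 * (nblk (w * Equiv.swap p q) p q : ℤ) + 1 := by
  have h := len_mul_swap_of_lt (w * Equiv.swap p q) hpq (by
    simpa [Equiv.Perm.mul_apply] using hw)
  rw [mul_assoc, Equiv.swap_mul_self, mul_one] at h
  exact h

/-- The cover characterization. -/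
lemma cov_iff (w : Equiv.Perm (Fin n)) {p q : Fin n} (hpq : p < q) :
    len (w * Equiv.swap p q) = len w + 1 ↔
      (w p < w q ∧ ∀ r, p < r → r < q → ¬(w p < w r ∧ w r < w q)) := by
  have hwpq : w p ≠ w q := fun h => (ne_of_lt hpq) (w.injective h)
  constructor
  · intro h
    rcases lt_or_gt_of_ne hwpq with hw | hw
    · have hf := len_mul_swap_of_lt w hpq hw
      refine ⟨hw, fun r hr1 hr2 hr3 => ?_⟩
      have : 0 < nblk w p q := by
        rw [nblk, Finset.card_pos]
        exact ⟨r, by simp [hr1, hr2, hr3.1, hr3.2]⟩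
      rw [h] at hf
      push_cast at hf
      omega
    · exfalso
      have hf := len_mul_swap_of_gt w hpq hw
      rw [h] at hf
      push_cast at hf
      omega
  · rintro ⟨hw, hblk⟩
    have hf := len_mul_swap_of_lt w hpq hw
    have : nblk w p q = 0 := by
      rw [nblk, Finset.card_eq_zero, Finset.filter_eq_empty_iff]
      rintro r - ⟨h1, h2, h3, h4⟩
      exact hblk r h1 h2 ⟨h3, h4⟩
    rw [this] at hf
    push_cast at hf
    omega

end LenFormula

/-! ### Cover conditions for shifted permutations -/

section Shifts
variable {n : ℕ} {i j k : Fin n}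

lemma shift1 (w : Equiv.Perm (Fin n)) (hij : i < j) (hjk : j < k) :
    len (w * Equiv.swap j k * Equiv.swap i j) = len (w * Equiv.swap j k) + 1 ↔
      (w i < w k ∧ ∀ r, i < r → r < j → ¬(w i < w r ∧ w r < w k)) := by
  have vi : (w * Equiv.swap j k) i = w i := by
    rw [Equiv.Perm.mul_apply, Equiv.swap_apply_of_ne_of_ne hij.ne (hij.trans hjk).ne]
  have vj : (w * Equiv.swap j k) j = w k := by
    rw [Equiv.Perm.mul_apply, Equiv.swap_apply_left]
  have vr : ∀ r, i < r → r < j → (w * Equiv.swap j k) r = w r := fun r _ h2 => by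
    rw [Equiv.Perm.mul_apply, Equiv.swap_apply_of_ne_of_ne h2.ne (h2.trans hjk).ne]
  rw [cov_iff _ hij]
  constructor
  · rintro ⟨h1, h2⟩
    rw [vi, vj] at h1
    refine ⟨h1, fun r a b hc => h2 r a b ?_⟩
    rw [vi, vj, vr r a b]; exact hc
  · rintro ⟨h1, h2⟩
    refine ⟨by rw [vi, vj]; exact h1, fun r a b hc => h2 r a b ?_⟩
    rw [vi, vj, vr r a b] at hc; exact hc

lemma shift2 (w : Equiv.Perm (Fin n)) (hij : i < j) (hjk : j < k) :
    len (w * Equiv.swap i k * Equiv.swap j k) = len (w * Equiv.swap i k) + 1 ↔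
      (w j < w i ∧ ∀ r, j < r → r < k → ¬(w j < w r ∧ w r < w i)) := by
  have vj : (w * Equiv.swap i k) j = w j := by
    rw [Equiv.Perm.mul_apply, Equiv.swap_apply_of_ne_of_ne hij.ne' hjk.ne]
  have vk : (w * Equiv.swap i k) k = w i := by
    rw [Equiv.Perm.mul_apply, Equiv.swap_apply_right]
  have vr : ∀ r, j < r → r < k → (w * Equiv.swap i k) r = w r := fun r h1 h2 => by
    rw [Equiv.Perm.mul_apply, Equiv.swap_apply_of_ne_of_ne ((hij.trans h1).ne') h2.ne]
  rw [cov_iff _ hjk]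
  constructor
  · rintro ⟨h1, h2⟩
    rw [vj, vk] at h1
    refine ⟨h1, fun r a b hc => h2 r a b ?_⟩
    rw [vj, vk, vr r a b]; exact hc
  · rintro ⟨h1, h2⟩
    refine ⟨by rw [vj, vk]; exact h1, fun r a b hc => h2 r a b ?_⟩
    rw [vj, vk, vr r a b] at hc; exact hc

lemma shift3 (w : Equiv.Perm (Fin n)) (hij : i < j) (hjk : j < k) :
    len (w * Equiv.swap i j * Equiv.swap i k) = len (w * Equiv.swap i j) + 1 ↔
      (w j < w k ∧ ¬(w j < w i ∧ w i < w k) ∧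
        ∀ r, i < r → r < k → r ≠ j → ¬(w j < w r ∧ w r < w k)) := by
  have hik : i < k := hij.trans hjk
  have vi : (w * Equiv.swap i j) i = w j := by
    rw [Equiv.Perm.mul_apply, Equiv.swap_apply_left]
  have vk : (w * Equiv.swap i j) k = w k := by
    rw [Equiv.Perm.mul_apply, Equiv.swap_apply_of_ne_of_ne hik.ne' hjk.ne']
  have vj : (w * Equiv.swap i j) j = w i := by
    rw [Equiv.Perm.mul_apply, Equiv.swap_apply_right]
  have vr : ∀ r, r ≠ i → r ≠ j → (w * Equiv.swap i j) r = w r := fun r h1 h2 => by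
    rw [Equiv.Perm.mul_apply, Equiv.swap_apply_of_ne_of_ne h1 h2]
  rw [cov_iff _ hik]
  constructor
  · rintro ⟨h1, h2⟩
    rw [vi, vk] at h1
    refine ⟨h1, ?_, fun r a b hne hc => h2 r a b ?_⟩
    · intro hc
      exact h2 j hij hjk (by rw [vi, vj, vk]; exact hc)
    · rw [vi, vk, vr r (ne_of_gt a) hne]; exact hc
  · rintro ⟨h1, h2, h3⟩
    refine ⟨by rw [vi, vk]; exact h1, fun r a b hc => ?_⟩
    rcases eq_or_ne r j with rfl | hne
    · rw [vi, vj, vk] at hc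
      exact h2 hc
    · rw [vi, vk, vr r (ne_of_gt a) hne] at hc
      exact h3 r a b hne hc

lemma shift4 (w : Equiv.Perm (Fin n)) (hij : i < j) (hjk : j < k) :
    len (w * Equiv.swap i j * Equiv.swap j k) = len (w * Equiv.swap i j) + 1 ↔
      (w i < w k ∧ ∀ r, j < r → r < k → ¬(w i < w r ∧ w r < w k)) := by
  have vj : (w * Equiv.swap i j) j = w i := by
    rw [Equiv.Perm.mul_apply, Equiv.swap_apply_right]
  have vk : (w * Equiv.swap i j) k = w k := by
    rw [Equiv.Perm.mul_apply, Equiv.swap_apply_of_ne_of_ne (hij.trans hjk).ne' hjk.ne']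
  have vr : ∀ r, j < r → r < k → (w * Equiv.swap i j) r = w r := fun r h1 h2 => by
    rw [Equiv.Perm.mul_apply, Equiv.swap_apply_of_ne_of_ne ((hij.trans h1).ne') h1.ne']
  rw [cov_iff _ hjk]
  constructor
  · rintro ⟨h1, h2⟩
    rw [vj, vk] at h1
    refine ⟨h1, fun r a b hc => h2 r a b ?_⟩
    rw [vj, vk, vr r a b]; exact hc
  · rintro ⟨h1, h2⟩
    refine ⟨by rw [vj, vk]; exact h1, fun r a b hc => h2 r a b ?_⟩
    rw [vj, vk, vr r a b] at hc; exact hc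

lemma shift5 (w : Equiv.Perm (Fin n)) (hij : i < j) (hjk : j < k) :
    len (w * Equiv.swap j k * Equiv.swap i k) = len (w * Equiv.swap j k) + 1 ↔
      (w i < w j ∧ ¬(w i < w k ∧ w k < w j) ∧
        ∀ r, i < r → r < k → r ≠ j → ¬(w i < w r ∧ w r < w j)) := by
  have hik : i < k := hij.trans hjk
  have vi : (w * Equiv.swap j k) i = w i := by
    rw [Equiv.Perm.mul_apply, Equiv.swap_apply_of_ne_of_ne hij.ne hik.ne]
  have vk : (w * Equiv.swap j k) k = w j := by
    rw [Equiv.Perm.mul_apply, Equiv.swap_apply_right]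
  have vj : (w * Equiv.swap j k) j = w k := by
    rw [Equiv.Perm.mul_apply, Equiv.swap_apply_left]
  have vr : ∀ r, r ≠ j → r ≠ k → (w * Equiv.swap j k) r = w r := fun r h1 h2 => by
    rw [Equiv.Perm.mul_apply, Equiv.swap_apply_of_ne_of_ne h1 h2]
  rw [cov_iff _ hik]
  constructor
  · rintro ⟨h1, h2⟩
    rw [vi, vk] at h1
    refine ⟨h1, ?_, fun r a b hne hc => h2 r a b ?_⟩
    · intro hc
      exact h2 j hij hjk (by rw [vi, vj, vk]; exact hc)
    · rw [vi, vk, vr r hne (ne_of_lt b)]; exact hc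
  · rintro ⟨h1, h2, h3⟩
    refine ⟨by rw [vi, vk]; exact h1, fun r a b hc => ?_⟩
    rcases eq_or_ne r j with rfl | hne
    · rw [vi, vj, vk] at hc
      exact h2 hc
    · rw [vi, vk, vr r hne (ne_of_lt b)] at hc
      exact h3 r a b hne hc

lemma shift6 (w : Equiv.Perm (Fin n)) (hij : i < j) (hjk : j < k) :
    len (w * Equiv.swap i k * Equiv.swap i j) = len (w * Equiv.swap i k) + 1 ↔
      (w k < w j ∧ ∀ r, i < r → r < j → ¬(w k < w r ∧ w r < w j)) := by
  have vi : (w * Equiv.swap i k) i = w k := by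
    rw [Equiv.Perm.mul_apply, Equiv.swap_apply_left]
  have vj : (w * Equiv.swap i k) j = w j := by
    rw [Equiv.Perm.mul_apply, Equiv.swap_apply_of_ne_of_ne hij.ne' hjk.ne]
  have vr : ∀ r, i < r → r < j → (w * Equiv.swap i k) r = w r := fun r h1 h2 => by
    rw [Equiv.Perm.mul_apply, Equiv.swap_apply_of_ne_of_ne h1.ne' (h2.trans hjk).ne]
  rw [cov_iff _ hij]
  constructor
  · rintro ⟨h1, h2⟩
    rw [vi, vj] at h1
    refine ⟨h1, fun r a b hc => h2 r a b ?_⟩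
    rw [vi, vj, vr r a b]; exact hc
  · rintro ⟨h1, h2⟩
    refine ⟨by rw [vi, vj]; exact h1, fun r a b hc => h2 r a b ?_⟩
    rw [vi, vj, vr r a b] at hc; exact hc

end Shifts

/-! ### The two core combinatorial identities -/

section Core
variable {n : ℕ} {i j k : Fin n}

lemma coreI_logic (w : Equiv.Perm (Fin n)) (hij : i < j) (hjk : j < k) :
    (((w j < w k ∧ ∀ r, j < r → r < k → ¬(w j < w r ∧ w r < w k)) ∧
      (w i < w k ∧ ∀ r, i < r → r < j → ¬(w i < w r ∧ w r < w k))) ↔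
     (((w i < w k ∧ ∀ r, i < r → r < k → ¬(w i < w r ∧ w r < w k)) ∧
       (w j < w i ∧ ∀ r, j < r → r < k → ¬(w j < w r ∧ w r < w i))) ∨
      ((w i < w j ∧ ∀ r, i < r → r < j → ¬(w i < w r ∧ w r < w j)) ∧
       (w j < w k ∧ ¬(w j < w i ∧ w i < w k) ∧
        ∀ r, i < r → r < k → r ≠ j → ¬(w j < w r ∧ w r < w k))))) ∧
    ¬(((w i < w k ∧ ∀ r, i < r → r < k → ¬(w i < w r ∧ w r < w k)) ∧
       (w j < w i ∧ ∀ r, j < r → r < k → ¬(w j < w r ∧ w r < w i))) ∧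
      ((w i < w j ∧ ∀ r, i < r → r < j → ¬(w i < w r ∧ w r < w j)) ∧
       (w j < w k ∧ ¬(w j < w i ∧ w i < w k) ∧
        ∀ r, i < r → r < k → r ≠ j → ¬(w j < w r ∧ w r < w k)))) := by
  have hwne : ∀ r s : Fin n, r ≠ s → w r ≠ w s := fun r s h hh => h (w.injective hh)
  constructor
  · constructor
    · rintro ⟨⟨hbc, P1⟩, ⟨hac, P2⟩⟩
      rcases lt_or_gt_of_ne (hwne i j hij.ne) with hab | hba
      · refine Or.inr ⟨⟨hab, fun r h1 h2 hc => P2 r h1 h2 ⟨hc.1, hc.2.trans hbc⟩⟩,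
          hbc, fun hc => lt_asymm hab hc.1, fun r h1 h2 hne hc => ?_⟩
        rcases lt_trichotomy r j with hrj | rfl | hrj
        · exact P2 r h1 hrj ⟨hab.trans hc.1, hc.2⟩
        · exact hne rfl
        · exact P1 r hrj h2 hc
      · refine Or.inl ⟨⟨hac, fun r h1 h2 hc => ?_⟩,
          hba, fun r h1 h2 hc => P1 r h1 h2 ⟨hc.1, hc.2.trans hac⟩⟩
        rcases lt_trichotomy r j with hrj | rfl | hrj
        · exact P2 r h1 hrj hc
        · exact lt_asymm hba hc.1
        · exact P1 r hrj h2 ⟨hba.trans hc.1, hc.2⟩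
    · rintro (⟨⟨hac, P3⟩, ⟨hba, P4⟩⟩ | ⟨⟨hab, P5⟩, ⟨hbc, _, P6⟩⟩)
      · refine ⟨⟨hba.trans hac, fun r h1 h2 hc => ?_⟩,
          hac, fun r h1 h2 hc => P3 r h1 (h2.trans hjk) hc⟩
        rcases lt_or_gt_of_ne (hwne r i (ne_of_gt (hij.trans h1))) with hri | hri
        · exact P4 r h1 h2 ⟨hc.1, hri⟩
        · exact P3 r (hij.trans h1) h2 ⟨hri, hc.2⟩
      · refine ⟨⟨hbc, fun r h1 h2 hc => P6 r (hij.trans h1) h2 (ne_of_gt h1) hc⟩,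
          hab.trans hbc, fun r h1 h2 hc => ?_⟩
        rcases lt_or_gt_of_ne (hwne r j (ne_of_lt h2)) with hrj | hrj
        · exact P5 r h1 h2 ⟨hc.1, hrj⟩
        · exact P6 r h1 (h2.trans hjk) (ne_of_lt h2) ⟨hrj, hc.2⟩
  · rintro ⟨⟨_, ⟨hba, _⟩⟩, ⟨⟨hab, _⟩, _⟩⟩
    exact lt_asymm hab hba

lemma coreII_logic (w : Equiv.Perm (Fin n)) (hij : i < j) (hjk : j < k) :
    (((w i < w j ∧ ∀ r, i < r → r < j → ¬(w i < w r ∧ w r < w j)) ∧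
      (w i < w k ∧ ∀ r, j < r → r < k → ¬(w i < w r ∧ w r < w k))) ↔
     (((w j < w k ∧ ∀ r, j < r → r < k → ¬(w j < w r ∧ w r < w k)) ∧
       (w i < w j ∧ ¬(w i < w k ∧ w k < w j) ∧
        ∀ r, i < r → r < k → r ≠ j → ¬(w i < w r ∧ w r < w j))) ∨
      ((w i < w k ∧ ∀ r, i < r → r < k → ¬(w i < w r ∧ w r < w k)) ∧
       (w k < w j ∧ ∀ r, i < r → r < j → ¬(w k < w r ∧ w r < w j))))) ∧
    ¬(((w j < w k ∧ ∀ r, j < r → r < k → ¬(w j < w r ∧ w r < w k)) ∧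
       (w i < w j ∧ ¬(w i < w k ∧ w k < w j) ∧
        ∀ r, i < r → r < k → r ≠ j → ¬(w i < w r ∧ w r < w j))) ∧
      ((w i < w k ∧ ∀ r, i < r → r < k → ¬(w i < w r ∧ w r < w k)) ∧
       (w k < w j ∧ ∀ r, i < r → r < j → ¬(w k < w r ∧ w r < w j)))) := by
  have hwne : ∀ r s : Fin n, r ≠ s → w r ≠ w s := fun r s h hh => h (w.injective hh)
  constructor
  · constructor
    · rintro ⟨⟨hab, P5⟩, ⟨hac, P7⟩⟩
      rcases lt_or_gt_of_ne (hwne j k hjk.ne) with hbc | hcb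
      · refine Or.inl ⟨⟨hbc, fun r h1 h2 hc => P7 r h1 h2 ⟨hab.trans hc.1, hc.2⟩⟩,
          hab, fun hc => lt_asymm hbc hc.2, fun r h1 h2 hne hc => ?_⟩
        rcases lt_trichotomy r j with hrj | rfl | hrj
        · exact P5 r h1 hrj hc
        · exact hne rfl
        · exact P7 r hrj h2 ⟨hc.1, hc.2.trans hbc⟩
      · refine Or.inr ⟨⟨hac, fun r h1 h2 hc => ?_⟩,
          hcb, fun r h1 h2 hc => P5 r h1 h2 ⟨hac.trans hc.1, hc.2⟩⟩
        rcases lt_trichotomy r j with hrj | rfl | hrj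
        · exact P5 r h1 hrj ⟨hc.1, hc.2.trans hcb⟩
        · exact lt_asymm hcb hc.2
        · exact P7 r hrj h2 hc
    · rintro (⟨⟨hbc, P1⟩, ⟨hab, _, P8⟩⟩ | ⟨⟨hac, P3⟩, ⟨hcb, P9⟩⟩)
      · refine ⟨⟨hab, fun r h1 h2 hc => P8 r h1 (h2.trans hjk) (ne_of_lt h2) hc⟩,
          hab.trans hbc, fun r h1 h2 hc => ?_⟩
        rcases lt_or_gt_of_ne (hwne r j (ne_of_gt h1)) with hrj | hrj
        · exact P8 r (hij.trans h1) h2 (ne_of_gt h1) ⟨hc.1, hrj⟩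
        · exact P1 r h1 h2 ⟨hrj, hc.2⟩
      · refine ⟨⟨hac.trans hcb, fun r h1 h2 hc => ?_⟩,
          hac, fun r h1 h2 hc => P3 r (hij.trans h1) h2 hc⟩
        rcases lt_or_gt_of_ne (hwne r k (ne_of_lt (h2.trans hjk))) with hrk | hrk
        · exact P3 r h1 (h2.trans hjk) ⟨hc.1, hrk⟩
        · exact P9 r h1 h2 ⟨hrk, hc.2⟩
  · rintro ⟨⟨⟨hbc, _⟩, _⟩, ⟨_, ⟨hcb, _⟩⟩⟩
    exact lt_asymm hbc hcb

lemma coreI (w : Equiv.Perm (Fin n)) (hij : i < j) (hjk : j < k) :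
    (((len (w * Equiv.swap j k) = len w + 1 ∧
       len (w * Equiv.swap j k * Equiv.swap i j) = len (w * Equiv.swap j k) + 1) ↔
      ((len (w * Equiv.swap i k) = len w + 1 ∧
        len (w * Equiv.swap i k * Equiv.swap j k) = len (w * Equiv.swap i k) + 1) ∨
       (len (w * Equiv.swap i j) = len w + 1 ∧
        len (w * Equiv.swap i j * Equiv.swap i k) = len (w * Equiv.swap i j) + 1)))) ∧
    ¬((len (w * Equiv.swap i k) = len w + 1 ∧
       len (w * Equiv.swap i k * Equiv.swap j k) = len (w * Equiv.swap i k) + 1) ∧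
      (len (w * Equiv.swap i j) = len w + 1 ∧
       len (w * Equiv.swap i j * Equiv.swap i k) = len (w * Equiv.swap i j) + 1)) := by
  have hik : i < k := hij.trans hjk
  rw [cov_iff w hjk, cov_iff w hik, cov_iff w hij,
    shift1 w hij hjk, shift2 w hij hjk, shift3 w hij hjk]
  exact coreI_logic w hij hjk

lemma coreII (w : Equiv.Perm (Fin n)) (hij : i < j) (hjk : j < k) :
    (((len (w * Equiv.swap i j) = len w + 1 ∧
       len (w * Equiv.swap i j * Equiv.swap j k) = len (w * Equiv.swap i j) + 1) ↔
      ((len (w * Equiv.swap j k) = len w + 1 ∧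
        len (w * Equiv.swap j k * Equiv.swap i k) = len (w * Equiv.swap j k) + 1) ∨
       (len (w * Equiv.swap i k) = len w + 1 ∧
        len (w * Equiv.swap i k * Equiv.swap i j) = len (w * Equiv.swap i k) + 1)))) ∧
    ¬((len (w * Equiv.swap j k) = len w + 1 ∧
       len (w * Equiv.swap j k * Equiv.swap i k) = len (w * Equiv.swap j k) + 1) ∧
      (len (w * Equiv.swap i k) = len w + 1 ∧
       len (w * Equiv.swap i k * Equiv.swap i j) = len (w * Equiv.swap i k) + 1)) := by
  have hik : i < k := hij.trans hjk
  rw [cov_iff w hij, cov_iff w hjk, cov_iff w hik,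
    shift4 w hij hjk, shift5 w hij hjk, shift6 w hij hjk]
  exact coreII_logic w hij hjk

end Core

/-! ### Operator-level identities -/

section Ops
variable {n : ℕ} {i j k : Fin n}

lemma swap_prod_eq1 (hij : i ≠ j) (hjk : j ≠ k) (hik : i ≠ k) :
    Equiv.swap j k * Equiv.swap i j = Equiv.swap i k * Equiv.swap j k := by
  ext x
  simp only [Equiv.Perm.mul_apply, Equiv.swap_apply_def]
  split_ifs <;> simp_all

lemma swap_prod_eq2 (hij : i ≠ j) (hjk : j ≠ k) (hik : i ≠ k) :
    Equiv.swap j k * Equiv.swap i j = Equiv.swap i j * Equiv.swap i k := by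
  ext x
  simp only [Equiv.Perm.mul_apply, Equiv.swap_apply_def]
  split_ifs <;> simp_all

lemma swap_prod_eq3 (hij : i ≠ j) (hjk : j ≠ k) (hik : i ≠ k) :
    Equiv.swap i j * Equiv.swap j k = Equiv.swap j k * Equiv.swap i k := by
  ext x
  simp only [Equiv.Perm.mul_apply, Equiv.swap_apply_def]
  split_ifs <;> simp_all

lemma swap_prod_eq4 (hij : i ≠ j) (hjk : j ≠ k) (hik : i ≠ k) :
    Equiv.swap i j * Equiv.swap j k = Equiv.swap i k * Equiv.swap i j := by
  ext x
  simp only [Equiv.Perm.mul_apply, Equiv.swap_apply_def]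
  split_ifs <;> simp_all

lemma bruhatOp_single (i j : Fin n) (w : Equiv.Perm (Fin n)) (m : ℤ) :
    bruhatOp i j (single w m) =
      if len (w * Equiv.swap i j) = len w + 1 then
        (single (w * Equiv.swap i j) m : Equiv.Perm (Fin n) →₀ ℤ) else 0 := by
  rw [bruhatOp, Finsupp.lsum_single]
  rw [apply_ite (fun (φ : ℤ →ₗ[ℤ] (Equiv.Perm (Fin n) →₀ ℤ)) => φ m)]
  simp

lemma ite_collapse {c d : Prop} [Decidable c] [Decidable d] {M : Type*} [AddCommMonoid M]
    (X : M) : (if c then (if d then X else 0) else 0) = if c ∧ d then X else 0 := by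
  split_ifs <;> simp_all

lemma opI (hij : i < j) (hjk : j < k) :
    bruhatOp i j ∘ₗ bruhatOp j k =
      bruhatOp j k ∘ₗ bruhatOp i k + bruhatOp i k ∘ₗ bruhatOp i j := by
  have hik : i < k := hij.trans hjk
  refine Finsupp.lhom_ext fun w m => ?_
  simp only [LinearMap.add_apply, LinearMap.coe_comp, Function.comp_apply]
  rw [bruhatOp_single j k w m, bruhatOp_single i k w m, bruhatOp_single i j w m]
  rw [apply_ite (bruhatOp i j), apply_ite (bruhatOp j k), apply_ite (bruhatOp i k)]
  simp only [map_zero, bruhatOp_single]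
  rw [ite_collapse, ite_collapse, ite_collapse]
  obtain ⟨hiff, hexcl⟩ := coreI w hij hjk
  have e1 : w * Equiv.swap j k * Equiv.swap i j = w * Equiv.swap i k * Equiv.swap j k := by
    rw [mul_assoc, mul_assoc, swap_prod_eq1 hij.ne hjk.ne hik.ne]
  have e2 : w * Equiv.swap j k * Equiv.swap i j = w * Equiv.swap i j * Equiv.swap i k := by
    rw [mul_assoc, mul_assoc, swap_prod_eq2 hij.ne hjk.ne hik.ne]
  by_cases hA : (len (w * Equiv.swap i k) = len w + 1 ∧
      len (w * Equiv.swap i k * Equiv.swap j k) = len (w * Equiv.swap i k) + 1)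
  · have hB : ¬(len (w * Equiv.swap i j) = len w + 1 ∧
        len (w * Equiv.swap i j * Equiv.swap i k) = len (w * Equiv.swap i j) + 1) :=
      fun hB => hexcl ⟨hA, hB⟩
    rw [if_pos (hiff.mpr (Or.inl hA)), if_pos hA, if_neg hB, add_zero, e1]
  · by_cases hB : (len (w * Equiv.swap i j) = len w + 1 ∧
        len (w * Equiv.swap i j * Equiv.swap i k) = len (w * Equiv.swap i j) + 1)
    · rw [if_pos (hiff.mpr (Or.inr hB)), if_pos hB, if_neg hA, zero_add, e2]
    · rw [if_neg (fun h => ((hiff.mp h).elim hA hB)), if_neg hA, if_neg hB, add_zero]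

lemma opII (hij : i < j) (hjk : j < k) :
    bruhatOp j k ∘ₗ bruhatOp i j =
      bruhatOp i k ∘ₗ bruhatOp j k + bruhatOp i j ∘ₗ bruhatOp i k := by
  have hik : i < k := hij.trans hjk
  refine Finsupp.lhom_ext fun w m => ?_
  simp only [LinearMap.add_apply, LinearMap.coe_comp, Function.comp_apply]
  rw [bruhatOp_single i j w m, bruhatOp_single j k w m, bruhatOp_single i k w m]
  rw [apply_ite (bruhatOp j k), apply_ite (bruhatOp i k), apply_ite (bruhatOp i j)]
  simp only [map_zero, bruhatOp_single]
  rw [ite_collapse, ite_collapse, ite_collapse]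
  obtain ⟨hiff, hexcl⟩ := coreII w hij hjk
  have e1 : w * Equiv.swap i j * Equiv.swap j k = w * Equiv.swap j k * Equiv.swap i k := by
    rw [mul_assoc, mul_assoc, swap_prod_eq3 hij.ne hjk.ne hik.ne]
  have e2 : w * Equiv.swap i j * Equiv.swap j k = w * Equiv.swap i k * Equiv.swap i j := by
    rw [mul_assoc, mul_assoc, swap_prod_eq4 hij.ne hjk.ne hik.ne]
  by_cases hA : (len (w * Equiv.swap j k) = len w + 1 ∧
      len (w * Equiv.swap j k * Equiv.swap i k) = len (w * Equiv.swap j k) + 1)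
  · have hB : ¬(len (w * Equiv.swap i k) = len w + 1 ∧
        len (w * Equiv.swap i k * Equiv.swap i j) = len (w * Equiv.swap i k) + 1) :=
      fun hB => hexcl ⟨hA, hB⟩
    rw [if_pos (hiff.mpr (Or.inl hA)), if_pos hA, if_neg hB, add_zero, e1]
  · by_cases hB : (len (w * Equiv.swap i k) = len w + 1 ∧
        len (w * Equiv.swap i k * Equiv.swap i j) = len (w * Equiv.swap i k) + 1)
    · rw [if_pos (hiff.mpr (Or.inr hB)), if_pos hB, if_neg hA, zero_add, e2]
    · rw [if_neg (fun h => ((hiff.mp h).elim hA hB)), if_neg hA, if_neg hB, add_zero]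

lemma sB_pos (h : i < j) : (sBruhatOp i j : (Equiv.Perm (Fin n) →₀ ℤ) →ₗ[ℤ] _) =
    bruhatOp i j := by
  rw [sBruhatOp, if_pos h]

lemma sB_neg (h : j < i) : (sBruhatOp i j : (Equiv.Perm (Fin n) →₀ ℤ) →ₗ[ℤ] _) =
    -bruhatOp j i := by
  rw [sBruhatOp, if_neg (not_lt_of_gt h), if_pos h]

end Ops

/-- The 3-term relation `[ij][jk] + [jk][ki] + [ki][ij] = 0` for distinct `i, j, k`,
with the convention `[ji] = -[ij]`. -/
theorem bruhatOp_three_term (n : ℕ) (i j k : Fin n)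
    (hij : i ≠ j) (hjk : j ≠ k) (hik : i ≠ k) :
    sBruhatOp i j ∘ₗ sBruhatOp j k + sBruhatOp j k ∘ₗ sBruhatOp k i +
      sBruhatOp k i ∘ₗ sBruhatOp i j = 0 := by
  rcases lt_or_gt_of_ne hij with h1 | h1
  · rcases lt_or_gt_of_ne hjk with h2 | h2
    · -- i < j < k
      rw [sB_pos h1, sB_pos h2, sB_neg (h1.trans h2)]
      rw [LinearMap.comp_neg, LinearMap.neg_comp, opI h1 h2]
      abel
    · rcases lt_or_gt_of_ne hik with h3 | h3
      · -- i < k < j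
        rw [sB_pos h1, sB_neg h2, sB_neg h3]
        rw [LinearMap.comp_neg, LinearMap.neg_comp, LinearMap.comp_neg, LinearMap.neg_comp,
          neg_neg, opII h3 h2]
        abel
      · -- k < i < j
        rw [sB_pos h1, sB_neg h2, sB_pos h3]
        rw [LinearMap.comp_neg, LinearMap.neg_comp, opI h3 h1]
        abel
  · rcases lt_or_gt_of_ne hjk with h2 | h2
    · rcases lt_or_gt_of_ne hik with h3 | h3
      · -- j < i < k
        rw [sB_neg h1, sB_pos h2, sB_neg h3]
        rw [LinearMap.neg_comp, LinearMap.comp_neg, LinearMap.neg_comp, LinearMap.comp_neg,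
          neg_neg, opII h1 h3]
        abel
      · -- j < k < i
        rw [sB_neg h1, sB_pos h2, sB_pos h3]
        rw [LinearMap.neg_comp, LinearMap.comp_neg, opI h2 h3]
        abel
    · -- k < j < i
      rw [sB_neg h1, sB_neg h2, sB_pos (h2.trans h1)]
      rw [LinearMap.neg_comp, LinearMap.comp_neg, LinearMap.comp_neg, LinearMap.neg_comp,
        neg_neg, opII h2 h1]
      abel
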